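/- Let k ≥ 2 be an integer, let h be a graph parameter and suppose the Turán-type function g = g_h is strongly k-ESS-stable. Then g is strongly k-ESS-stable with respect to every suitable partition (𝓐,𝓕) with abstract chromatic number k: for every ε > 0 there exist δ > 0 and N such that for every n ≥ N, every n-vertex graph G ∈ 𝓐 with h(G) ≥ (1−δ)·g(n,(𝓐,𝓕)) can be turned into the Turán graph T(n,k−1) by adding and/or deleting at most ε·n² edges. -/

import Mathlib

open SimpleGraph

/-- A family of finite graphs, given for each `n` as a predicate on graphs on `Fin n`. -/
abbrev GraphFamily := ∀ n : ℕ, SimpleGraph (Fin n) → Prop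

/-- `G` contains a copy of `F` as a (not necessarily induced) subgraph:
there is an injective map of vertices sending edges to edges. -/
def ContainsCopy {α β : Type} (G : SimpleGraph α) (F : SimpleGraph β) : Prop :=
  ∃ f : β → α, Function.Injective f ∧ ∀ ⦃u v⦄, F.Adj u v → G.Adj (f u) (f v)

/-- Membership of a graph on an arbitrary vertex type in a family, up to isomorphism. -/
def MemFam (𝓐 : GraphFamily) {β : Type} (G : SimpleGraph β) : Prop :=
  ∃ (n : ℕ) (H : SimpleGraph (Fin n)), Nonempty (G ≃g H) ∧ 𝓐 n H

/-- The family is closed under isomorphism. -/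
def IsoClosed (𝓐 : GraphFamily) : Prop :=
  ∀ (n : ℕ) (G G' : SimpleGraph (Fin n)), Nonempty (G ≃g G') → 𝓐 n G → 𝓐 n G'

/-- The complete multipartite graph with part sizes `m 0, …, m (r-1)`. -/
def completeMultipartite {r : ℕ} (m : Fin r → ℕ) : SimpleGraph (Σ i, Fin (m i)) :=
  completeMultipartiteGraph (fun i => Fin (m i))

/-- `(𝓐, 𝓐ᶜ)` is a suitable partition, witnessed by the integer `k ≥ 2`: for all
sufficiently large `n`, every complete `(k-1)`-partite graph with all parts of size
at least `n` belongs to `𝓐`, and no graph in `𝓐` contains the Turán graph `T(n,k)`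
as a subgraph. -/
def SuitableWith (𝓐 : GraphFamily) (k : ℕ) : Prop :=
  2 ≤ k ∧ ∃ N : ℕ, ∀ n, N ≤ n →
    ((∀ m : Fin (k - 1) → ℕ, (∀ i, n ≤ m i) → MemFam 𝓐 (completeMultipartite m)) ∧
     ∀ (n' : ℕ) (G : SimpleGraph (Fin n')), 𝓐 n' G → ¬ ContainsCopy G (turanGraph n k))

/-- A partition `(𝓐, 𝓐ᶜ)` is suitable: either complete graphs are eventually in `𝓐`,
or some `k ≥ 2` witnesses suitability. -/
def Suitable (𝓐 : GraphFamily) : Prop :=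
  (∃ N : ℕ, ∀ n, N ≤ n → 𝓐 n ⊤) ∨ ∃ k : ℕ, SuitableWith 𝓐 k

/-- Every complete `r`-partite graph with all parts sufficiently large is in `𝓐`. -/
def AllBigMultipartiteIn (𝓐 : GraphFamily) (r : ℕ) : Prop :=
  ∃ N : ℕ, ∀ m : Fin r → ℕ, (∀ i, N ≤ m i) → MemFam 𝓐 (completeMultipartite m)

/-- The partition `(𝓐, 𝓐ᶜ)` has (finite) abstract chromatic number `k`: complete graphs
are not eventually in `𝓐`, and `k` is the largest integer such that every complete
`(k-1)`-partite graph with all parts sufficiently large is in `𝓐`. -/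
def HasAbsChromNum (𝓐 : GraphFamily) (k : ℕ) : Prop :=
  (¬ ∃ N : ℕ, ∀ n, N ≤ n → 𝓐 n ⊤) ∧
  AllBigMultipartiteIn 𝓐 (k - 1) ∧
  ∀ j : ℕ, k ≤ j → ¬ AllBigMultipartiteIn 𝓐 j

/-- A graph parameter: a real value for every finite graph. -/
abbrev GraphParam := ∀ n : ℕ, SimpleGraph (Fin n) → ℝ

/-- A graph parameter is isomorphism-invariant and nonnegative. -/
def IsGraphParam (h : GraphParam) : Prop :=
  (∀ (n : ℕ) (G G' : SimpleGraph (Fin n)), Nonempty (G ≃g G') → h n G = h n G') ∧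
  ∀ (n : ℕ) (G : SimpleGraph (Fin n)), 0 ≤ h n G

/-- `g(n, F)`: the maximum of `h` over `F`-free graphs on `n` vertices. -/
noncomputable def exRel (h : GraphParam) (n : ℕ) {β : Type} (F : SimpleGraph β) : ℝ :=
  sSup {x : ℝ | ∃ G : SimpleGraph (Fin n), ¬ ContainsCopy G F ∧ h n G = x}

/-- `g(n, (𝓐, 𝓐ᶜ))`: the maximum of `h` over `n`-vertex graphs in `𝓐`. -/
noncomputable def exFam (h : GraphParam) (𝓐 : GraphFamily) (n : ℕ) : ℝ :=
  sSup {x : ℝ | ∃ G : SimpleGraph (Fin n), 𝓐 n G ∧ h n G = x}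

/-- `G` is a complete `r`-partite graph (some parts possibly empty). -/
def IsCompMultipartite {n : ℕ} (G : SimpleGraph (Fin n)) (r : ℕ) : Prop :=
  ∃ m : Fin r → ℕ, Nonempty (G ≃g completeMultipartite m)

/-- `g_h` is weakly `k`-ESS. -/
def WeaklyESS (h : GraphParam) (k : ℕ) : Prop :=
  ∀ (nF : ℕ) (F : SimpleGraph (Fin nF)), F.chromaticNumber = (k : ℕ∞) →
    ∀ ε : ℝ, 0 < ε → ∃ N : ℕ, ∀ n, N ≤ n →
      ∃ T : SimpleGraph (Fin n), IsCompMultipartite T (k - 1) ∧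
        (1 - ε) * h n T ≤ exRel h n F ∧ exRel h n F ≤ (1 + ε) * h n T

/-- `g_h` is strongly `k`-ESS. -/
def StronglyESS (h : GraphParam) (k : ℕ) : Prop :=
  ∀ (nF : ℕ) (F : SimpleGraph (Fin nF)), F.chromaticNumber = (k : ℕ∞) →
    ∀ ε : ℝ, 0 < ε → ∃ N : ℕ, ∀ n, N ≤ n →
      (1 - ε) * h n (turanGraph n (k - 1)) ≤ exRel h n F ∧
        exRel h n F ≤ (1 + ε) * h n (turanGraph n (k - 1))

/-- The edit distance between two graphs on the same vertex set: the size of the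
symmetric difference of the edge sets. -/
noncomputable def editDist {n : ℕ} (G T : SimpleGraph (Fin n)) : ℕ :=
  (symmDiff G.edgeSet T.edgeSet).ncard

/-- `g_h` is weakly `k`-ESS-stable. -/
def WeaklyESSStable (h : GraphParam) (k : ℕ) : Prop :=
  WeaklyESS h k ∧
  ∀ (nF : ℕ) (F : SimpleGraph (Fin nF)), F.chromaticNumber = (k : ℕ∞) →
    ∀ ε : ℝ, 0 < ε → ∃ δ : ℝ, 0 < δ ∧ ∃ N : ℕ, ∀ n, N ≤ n →
      ∀ G : SimpleGraph (Fin n), ¬ ContainsCopy G F →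
        (1 - δ) * exRel h n F ≤ h n G →
        ∃ T : SimpleGraph (Fin n), IsCompMultipartite T (k - 1) ∧
          (editDist G T : ℝ) ≤ ε * (n : ℝ) ^ 2

/-- `g_h` is strongly `k`-ESS-stable. -/
def StronglyESSStable (h : GraphParam) (k : ℕ) : Prop :=
  StronglyESS h k ∧
  ∀ (nF : ℕ) (F : SimpleGraph (Fin nF)), F.chromaticNumber = (k : ℕ∞) →
    ∀ ε : ℝ, 0 < ε → ∃ δ : ℝ, 0 < δ ∧ ∃ N : ℕ, ∀ n, N ≤ n →
      ∀ G : SimpleGraph (Fin n), ¬ ContainsCopy G F →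
        (1 - δ) * exRel h n F ≤ h n G →
        (editDist G (turanGraph n (k - 1)) : ℝ) ≤ ε * (n : ℝ) ^ 2

/-- `σ(F)`: the smallest size of a color class among all proper `k`-colorings of `F`. -/
noncomputable def graphSigma {nF : ℕ} (F : SimpleGraph (Fin nF)) (k : ℕ) : ℕ :=
  sInf {t : ℕ | ∃ C : F.Coloring (Fin k), ∃ i : Fin k,
    (Finset.univ.filter fun v => C v = i).card = t}

/-- Part sizes obtained from `m` by adding `t` parts of size `1` (adding `t`
universal vertices to the complete multipartite graph with parts `m`). -/
def addUniversal (t : ℕ) {r : ℕ} (m : Fin r → ℕ) : Fin (t + r) → ℕ :=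
  fun i => if h : (i : ℕ) < t then 1 else m ⟨(i : ℕ) - t, by have := i.isLt; omega⟩

/-- `T(n, r, t)`: the Turán graph `T(n - t, r)` together with `t` universal vertices
(the vertices with value `< t`). -/
def turanPlus (n r t : ℕ) : SimpleGraph (Fin n) :=
  SimpleGraph.fromRel fun x y =>
    (x : ℕ) < t ∨ ((x : ℕ) - t) % r ≠ ((y : ℕ) - t) % r

/-- `T⁺(n, r)`: the Turán graph `T(n, r)` with one extra edge (between `r - 1` and
`2r - 1`) inside one of its smallest parts (the residue class of `r - 1`). -/
def turanPlusEdge (n r : ℕ) : SimpleGraph (Fin n) :=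
  SimpleGraph.fromRel fun x y =>
    (x : ℕ) % r ≠ (y : ℕ) % r ∨ ((x : ℕ) = r - 1 ∧ (y : ℕ) = 2 * r - 1)

/-- `σ(𝓐, 𝓐ᶜ)`: the smallest minimum part size (= σ) of a complete `k`-partite graph,
with all `k` parts nonempty, that is contained in no member of `𝓐`. -/
noncomputable def famSigma (𝓐 : GraphFamily) (k : ℕ) : ℕ :=
  sInf {t : ℕ | ∃ m : Fin k → ℕ, (∀ i, 1 ≤ m i) ∧ (∃ i, m i = t ∧ ∀ j, m i ≤ m j) ∧
    ∀ (n : ℕ) (G : SimpleGraph (Fin n)), 𝓐 n G → ¬ ContainsCopy G (completeMultipartite m)}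

/-- `g_h` is weakly `k`-ESS-sigma. -/
def WeaklyESSSigma (h : GraphParam) (k : ℕ) : Prop :=
  ∀ (nF : ℕ) (F : SimpleGraph (Fin nF)), F.chromaticNumber = (k : ℕ∞) →
    ∃ N : ℕ, ∀ n, N ≤ n → ∃ (m : Fin (k - 1) → ℕ) (T : SimpleGraph (Fin n)),
      Nonempty (T ≃g completeMultipartite (addUniversal (graphSigma F k - 1) m)) ∧
      exRel h n F = h n T

/-- `g_h` is strongly `k`-ESS-sigma. -/
def StronglyESSSigma (h : GraphParam) (k : ℕ) : Prop :=
  ∀ (nF : ℕ) (F : SimpleGraph (Fin nF)), F.chromaticNumber = (k : ℕ∞) →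
    ∃ N : ℕ, ∀ n, N ≤ n →
      exRel h n F = h n (turanPlus n (k - 1) (graphSigma F k - 1))

/-- The number of copies of `F` in `G`: subgraphs of `G` isomorphic to `F`. -/
noncomputable def copyCount {n : ℕ} {β : Type} (G : SimpleGraph (Fin n))
    (F : SimpleGraph β) : ℕ :=
  Nat.card {H : G.Subgraph // Nonempty (F ≃g H.coe)}

/-- `g_h` is `k`-ESS-supersat. -/
def ESSSupersat (h : GraphParam) (k : ℕ) : Prop :=
  ∀ (nF : ℕ) (F : SimpleGraph (Fin nF)), F.chromaticNumber = (k : ℕ∞) →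
    ∀ ε : ℝ, 0 < ε → ∃ δ : ℝ, 0 < δ ∧ ∃ N : ℕ, ∀ n, N ≤ n →
      ∀ G : SimpleGraph (Fin n), (1 + ε) * exRel h n F < h n G →
        δ * (n : ℝ) ^ nF ≤ (_root_.copyCount G F : ℝ)

/-- A proper edge-coloring of `G`, given as a symmetric function of the two endpoints:
edges sharing a vertex receive distinct colors. -/
def ProperEdgeColoring {α C : Type} (G : SimpleGraph α) (c : α → α → C) : Prop :=
  (∀ u v, c u v = c v u) ∧
  ∀ u v w, G.Adj u v → G.Adj u w → v ≠ w → c u v ≠ c u w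

/-- The edge-colored graph `(G, c)` contains a rainbow copy of `F`. -/
def HasRainbowCopy {α β C : Type} (G : SimpleGraph α) (c : α → α → C)
    (F : SimpleGraph β) : Prop :=
  ∃ f : β → α, Function.Injective f ∧ (∀ ⦃u v⦄, F.Adj u v → G.Adj (f u) (f v)) ∧
    ∀ u v u' v', F.Adj u v → F.Adj u' v' → s(u, v) ≠ s(u', v') →
      c (f u) (f v) ≠ c (f u') (f v')

/-- The family `𝓐` is hereditary: closed under taking induced subgraphs
(equivalently, under induced-subgraph embeddings). -/
def Hereditary (𝓐 : GraphFamily) : Prop :=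
  ∀ (n n' : ℕ) (G : SimpleGraph (Fin n)) (G' : SimpleGraph (Fin n')),
    𝓐 n G → Nonempty (G' ↪g G) → 𝓐 n' G'

/-- The family `𝓐` is monotone: closed under taking subgraphs. -/
def MonotoneFam (𝓐 : GraphFamily) : Prop :=
  ∀ (n n' : ℕ) (G : SimpleGraph (Fin n)) (G' : SimpleGraph (Fin n')),
    𝓐 n G → ContainsCopy G G' → 𝓐 n' G'

/-- `(𝓐, 𝓐ᶜ)` is an edge-critical partition with abstract chromatic number `k`. -/
def EdgeCritical (𝓐 : GraphFamily) (k : ℕ) : Prop :=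
  Suitable 𝓐 ∧ HasAbsChromNum 𝓐 k ∧
  ∃ N : ℕ, ∀ n, N ≤ n → ∀ (n' : ℕ) (G : SimpleGraph (Fin n')), 𝓐 n' G →
    ¬ ContainsCopy G (turanPlusEdge n (k - 1))

/-- The graph obtained from `G` by adding a new vertex (namely `none`) joined to all
neighbors of the vertex `v`. -/
def duplicateVertex {n : ℕ} (G : SimpleGraph (Fin n)) (v : Fin n) :
    SimpleGraph (Option (Fin n)) :=
  SimpleGraph.fromRel fun x y =>
    match x, y with
    | some a, some b => G.Adj a b
    | none, some b => G.Adj v b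
    | _, _ => False

/-- The graph parameter `h` is balanced for `k`. -/
def BalancedParam (h : GraphParam) (k : ℕ) : Prop :=
  ∃ a : ℝ, 0 < a ∧
    (∃ C : ℝ, 0 < C ∧ ∀ (n : ℕ) (G : SimpleGraph (Fin n)) (u v : Fin n),
      u ≠ v → ¬ G.Adj u v →
      |h n (G ⊔ SimpleGraph.fromEdgeSet {s(u, v)}) - h n G| ≤ C * (n : ℝ) ^ a) ∧
    (∃ C : ℝ, 0 < C ∧ ∀ (n : ℕ) (G : SimpleGraph (Fin n)) (v : Fin n)
        (G'' : SimpleGraph (Fin (n + 1))), Nonempty (G'' ≃g duplicateVertex G v) →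
      |h (n + 1) G'' - h n G| ≤ C * (n : ℝ) ^ (a + 1)) ∧
    (∀ c : ℝ, 0 < c → ∃ (n₀ : ℕ) (c₁ c₂ : ℝ), 0 < c₁ ∧ 0 < c₂ ∧
      ∀ n, n₀ ≤ n → ∀ m : Fin (k - 1) → ℕ, (∀ i, c * (n : ℝ) ≤ (m i : ℝ)) →
        ∀ G : SimpleGraph (Fin n), Nonempty (G ≃g completeMultipartite m) →
          ((∀ u v : Fin n, u ≠ v → ¬ G.Adj u v →
              c₁ * (n : ℝ) ^ a ≤ h n (G ⊔ SimpleGraph.fromEdgeSet {s(u, v)}) - h n G ∧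
              h n (G ⊔ SimpleGraph.fromEdgeSet {s(u, v)}) - h n G ≤ c₂ * (n : ℝ) ^ a) ∧
           (∀ (v : Fin n) (G'' : SimpleGraph (Fin (n + 1))),
              Nonempty (G'' ≃g duplicateVertex G v) →
              c₁ * (n : ℝ) ^ (a + 1) ≤ h (n + 1) G'' - h n G ∧
              h (n + 1) G'' - h n G ≤ c₂ * (n : ℝ) ^ (a + 1)))) ∧
    (∀ c : ℝ, 0 < c → ∃ (n₀ : ℕ) (c₁ c₂ : ℝ), 0 < c₁ ∧ 0 < c₂ ∧
      ∀ n, n₀ ≤ n → ∀ m : Fin (k - 1) → ℕ, (∀ i, c * (n : ℝ) ≤ (m i : ℝ)) →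
        ∀ G : SimpleGraph (Fin n), Nonempty (G ≃g completeMultipartite m) →
          ∀ G''' : SimpleGraph (Fin n), G''' ≤ G →
            c₁ * ((G.edgeSet.ncard - G'''.edgeSet.ncard : ℕ) : ℝ) * (n : ℝ) ^ a ≤
              h n G - h n G''' ∧
            h n G - h n G''' ≤
              c₂ * ((G.edgeSet.ncard - G'''.edgeSet.ncard : ℕ) : ℝ) * (n : ℝ) ^ a)
section AuxStability

private lemma aux_containsCopy_of_iso {α β γ : Type} {G : SimpleGraph α} {H : SimpleGraph β}
    (e : G ≃g H) {F : SimpleGraph γ} (hc : ContainsCopy G F) : ContainsCopy H F := by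
  obtain ⟨f, hf, hadj⟩ := hc
  exact ⟨e ∘ f, e.toEquiv.injective.comp hf,
    fun u v huv => e.map_adj_iff.mpr (hadj huv)⟩

private def auxTpart (n r : ℕ) : Fin r → ℕ :=
  fun i => n / r + if (i : ℕ) < n % r then 1 else 0

private lemma aux_turanGraph_adj {n r : ℕ} (a b : Fin n) :
    (turanGraph n r).Adj a b ↔ (a : ℕ) % r ≠ (b : ℕ) % r := Iff.rfl

private lemma aux_turan_iso (n r : ℕ) (hr : 0 < r) :
    Nonempty (turanGraph n r ≃g completeMultipartite (auxTpart n r)) := by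
  have hto : ∀ v : Fin n, (v : ℕ) / r < auxTpart n r ⟨(v : ℕ) % r, Nat.mod_lt _ hr⟩ := by
    intro v
    have e1 := Nat.mod_add_div' (v : ℕ) r
    have e2 := Nat.mod_add_div' n r
    have hv := v.isLt
    simp only [auxTpart, Fin.val_mk]
    split_ifs with hcase
    · have : (v : ℕ) / r ≤ n / r := Nat.div_le_div_right (le_of_lt hv)
      omega
    · by_contra hcon
      push_neg at hcon
      have h3 : (n / r) * r ≤ ((v : ℕ) / r) * r := Nat.mul_le_mul_right r (by omega)
      omega
  have hinv : ∀ (i : Fin r) (j : Fin (auxTpart n r i)), (i : ℕ) + (j : ℕ) * r < n := by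
    intro i j
    have e2 := Nat.mod_add_div' n r
    have hj := j.isLt
    have hi := i.isLt
    simp only [auxTpart] at hj
    split_ifs at hj with hcase
    · have h3 : (j : ℕ) * r ≤ (n / r) * r := Nat.mul_le_mul_right r (by omega)
      omega
    · have h3 : ((j : ℕ) + 1) * r ≤ (n / r) * r := Nat.mul_le_mul_right r (by omega)
      rw [add_mul, one_mul] at h3
      omega
  let e : Fin n ≃ (Σ i : Fin r, Fin (auxTpart n r i)) :=
    { toFun := fun v => ⟨⟨(v : ℕ) % r, Nat.mod_lt _ hr⟩, ⟨(v : ℕ) / r, hto v⟩⟩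
      invFun := fun p => ⟨(p.1 : ℕ) + (p.2 : ℕ) * r, hinv p.1 p.2⟩
      left_inv := fun v => Fin.ext (Nat.mod_add_div' (v : ℕ) r)
      right_inv := by
        rintro ⟨i, j⟩
        have h1 : ((i : ℕ) + (j : ℕ) * r) % r = (i : ℕ) := by
          rw [Nat.add_mul_mod_self_right, Nat.mod_eq_of_lt i.isLt]
        have h2 : ((i : ℕ) + (j : ℕ) * r) / r = (j : ℕ) := by
          rw [Nat.add_mul_div_right _ _ hr, Nat.div_eq_of_lt i.isLt, Nat.zero_add]
        refine Sigma.ext (Fin.ext h1) ?_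
        exact (Fin.heq_ext_iff (congrArg (auxTpart n r) (Fin.ext h1))).mpr h2 }
  refine ⟨⟨e, ?_⟩⟩
  intro a b
  show ¬ _ = _ ↔ ¬ _ = _
  exact not_congr ⟨fun hh => congrArg Fin.val hh, fun hh => Fin.ext hh⟩

private lemma aux_contains_turan {r t n : ℕ} (ht : 0 < t) (htr : t ≤ r)
    (m : Fin r → ℕ) (hm : ∀ i, n ≤ m i) :
    ContainsCopy (completeMultipartite m) (turanGraph n t) := by
  refine ⟨fun v => ⟨⟨(v : ℕ) % t, lt_of_lt_of_le (Nat.mod_lt _ ht) htr⟩,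
      ⟨(v : ℕ) / t, lt_of_lt_of_le (lt_of_le_of_lt (Nat.div_le_self _ _) v.isLt) (hm _)⟩⟩,
      ?_, ?_⟩
  · intro v w hvw
    have h1 : (v : ℕ) % t = (w : ℕ) % t := congrArg (fun p => ((p.1 : Fin r) : ℕ)) hvw
    have h2 : (v : ℕ) / t = (w : ℕ) / t := congrArg
      (fun p : (Σ i : Fin r, Fin (m i)) => (p.2 : ℕ)) hvw
    have e1 := Nat.mod_add_div' (v : ℕ) t
    have e2 := Nat.mod_add_div' (w : ℕ) t
    rw [h1, h2] at e1
    exact Fin.ext (by omega)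
  · intro v w hvw
    show ¬ _ = _
    intro hh
    exact hvw (congrArg Fin.val hh)

private lemma aux_mem_of_iso (𝓐 : GraphFamily) (hiso : IsoClosed 𝓐) {n r : ℕ}
    {m : Fin r → ℕ} (hmem : MemFam 𝓐 (completeMultipartite m))
    {G : SimpleGraph (Fin n)} (e : G ≃g completeMultipartite m) : 𝓐 n G := by
  obtain ⟨n₀, H, ⟨e₀⟩, hH⟩ := hmem
  have hn : n = n₀ := by
    have := Fintype.card_congr (e.trans e₀).toEquiv
    simpa using this
  subst hn
  exact hiso n H G ⟨(e.trans e₀).symm⟩ hH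

private lemma aux_bddAbove (h : GraphParam) (n : ℕ) (P : SimpleGraph (Fin n) → Prop) :
    BddAbove {x : ℝ | ∃ G, P G ∧ h n G = x} := by
  have heq : {x : ℝ | ∃ G, P G ∧ h n G = x} = (h n) '' {G | P G} := by
    ext x
    constructor
    · rintro ⟨G, hG, rfl⟩; exact ⟨G, hG, rfl⟩
    · rintro ⟨G, hG, rfl⟩; exact ⟨G, hG, rfl⟩
  rw [heq]
  exact ((Set.toFinite _).image _).bddAbove

private lemma aux_chrom_turan (M k : ℕ) (hk : 0 < k) (hkM : k ≤ M) :
    (turanGraph M k).chromaticNumber = (k : ℕ∞) := by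
  apply le_antisymm
  · have hc : (turanGraph M k).Colorable k :=
      ⟨SimpleGraph.Coloring.mk (fun v => ⟨(v : ℕ) % k, Nat.mod_lt _ hk⟩)
        (fun {v w} hadj heq => hadj (congrArg Fin.val heq))⟩
    simpa using hc.chromaticNumber_le
  · have emb : (⊤ : SimpleGraph (Fin k)) ↪g turanGraph M k := by
      refine ⟨⟨Fin.castLE hkM, Fin.castLE_injective hkM⟩, ?_⟩
      intro a b
      show (a : ℕ) % k ≠ (b : ℕ) % k ↔ a ≠ b
      rw [Nat.mod_eq_of_lt a.isLt, Nat.mod_eq_of_lt b.isLt]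
      exact not_congr ⟨fun hh => Fin.ext hh, fun hh => congrArg Fin.val hh⟩
    have hle := SimpleGraph.chromaticNumber_le_of_forall_imp
      (G := (⊤ : SimpleGraph (Fin k))) (G' := turanGraph M k)
      (fun n hn => SimpleGraph.Colorable.of_hom emb.toHom hn)
    rw [SimpleGraph.chromaticNumber_top] at hle
    simpa using hle

private lemma aux_bot_free (n M k : ℕ) (hk : 2 ≤ k) (hkM : k ≤ M) :
    ¬ ContainsCopy (⊥ : SimpleGraph (Fin n)) (turanGraph M k) := by
  rintro ⟨f, -, hadj⟩
  have hM2 : 2 ≤ M := le_trans hk hkM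
  have : (turanGraph M k).Adj ⟨0, by omega⟩ ⟨1, by omega⟩ := by
    show (0 : ℕ) % k ≠ 1 % k
    rw [Nat.mod_eq_of_lt (by omega), Nat.mod_eq_of_lt (by omega)]
    omega
  exact hadj this

end AuxStability

/-- If `g_h` is strongly `k`-ESS-stable, then `g_h` is strongly
`k`-ESS-stable with respect to every suitable partition with abstract chromatic
number `k`. -/
theorem stronglyESSStable_of_partition (k : ℕ) (hk : 2 ≤ k) (h : GraphParam)
    (hparam : IsGraphParam h) (hstab : StronglyESSStable h k)
    (𝓐 : GraphFamily) (hiso : IsoClosed 𝓐) (hsuit : Suitable 𝓐)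
    (habs : HasAbsChromNum 𝓐 k) :
    ∀ ε : ℝ, 0 < ε → ∃ δ : ℝ, 0 < δ ∧ ∃ N : ℕ, ∀ n, N ≤ n →
      ∀ G : SimpleGraph (Fin n), 𝓐 n G → (1 - δ) * exFam h 𝓐 n ≤ h n G →
        (editDist G (turanGraph n (k - 1)) : ℝ) ≤ ε * (n : ℝ) ^ 2 := by
  intro ε hε
  obtain ⟨habs1, ⟨N₁, hN₁⟩, habs3⟩ := habs
  have hsw : ∃ k', SuitableWith 𝓐 k' := by
    rcases hsuit with h1 | h2
    · exact absurd h1 habs1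
    · exact h2
  obtain ⟨k', hk'2, N₂, hN₂⟩ := hsw
  have hk'le : k' ≤ k := by
    by_contra hcon
    push_neg at hcon
    exact habs3 (k' - 1) (by omega) ⟨N₂, (hN₂ N₂ le_rfl).1⟩
  have hkeq : k' = k := by
    by_contra hne
    have hlt : k' < k := lt_of_le_of_ne hk'le hne
    obtain ⟨n₃, H, ⟨e₀⟩, hH⟩ :=
      hN₁ (fun _ : Fin (k - 1) => max N₁ N₂) (fun _ => le_max_left _ _)
    refine (hN₂ (max N₁ N₂) (le_max_right _ _)).2 n₃ H hH ?_
    exact aux_containsCopy_of_iso e₀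
      (aux_contains_turan (by omega) (by omega) _ (fun _ => le_rfl))
  subst hkeq
  set M := max N₂ k' with hM
  have hchi : (turanGraph M k').chromaticNumber = (k' : ℕ∞) :=
    aux_chrom_turan M k' (by omega) (le_max_right _ _)
  have hfree : ∀ (n' : ℕ) (G : SimpleGraph (Fin n')), 𝓐 n' G →
      ¬ ContainsCopy G (turanGraph M k') := (hN₂ M (le_max_left _ _)).2
  obtain ⟨hESS, hstab2⟩ := hstab
  obtain ⟨δ, hδpos, N₃, hN₃⟩ := hstab2 M (turanGraph M k') hchi ε hε
  set δ₀ := min δ 1 with hδ₀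
  have hδ₀pos : 0 < δ₀ := lt_min hδpos one_pos
  have hδ₀le1 : δ₀ ≤ 1 := min_le_right _ _
  have hδ₀leδ : δ₀ ≤ δ := min_le_left _ _
  obtain ⟨N₄, hN₄⟩ := hESS M (turanGraph M k') hchi (δ₀ / 4) (by positivity)
  refine ⟨δ₀ / 4, by positivity, max (max N₃ N₄) ((k' - 1) * N₁), ?_⟩
  intro n hn G hG hhG
  have hr : 0 < k' - 1 := by omega
  obtain ⟨eiso⟩ := aux_turan_iso n (k' - 1) hr
  have hTA : 𝓐 n (turanGraph n (k' - 1)) := by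
    refine aux_mem_of_iso 𝓐 hiso (hN₁ _ ?_) eiso
    intro i
    have h1 : N₁ * (k' - 1) ≤ n := by
      have hx := le_trans (le_max_right (max N₃ N₄) ((k' - 1) * N₁)) hn
      rwa [Nat.mul_comm] at hx
    have h2 : N₁ ≤ n / (k' - 1) := (Nat.le_div_iff_mul_le hr).mpr h1
    simp only [auxTpart, Fin.val_mk]
    split_ifs <;> omega
  -- basic inequalities
  have hT0 : 0 ≤ h n (turanGraph n (k' - 1)) := hparam.2 n _
  have hTf : h n (turanGraph n (k' - 1)) ≤ exFam h 𝓐 n :=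
    le_csSup (aux_bddAbove h n _) ⟨turanGraph n (k' - 1), hTA, rfl⟩
  have hGfree : ¬ ContainsCopy G (turanGraph M k') := hfree n G hG
  have hg0 : 0 ≤ exRel h n (turanGraph M k') :=
    le_trans (hparam.2 n ⊥) (le_csSup (aux_bddAbove h n _)
      ⟨⊥, aux_bot_free n M k' hk (le_max_right _ _), rfl⟩)
  have hess := hN₄ n (le_trans (le_trans (le_max_right N₃ N₄) (le_max_left _ _)) hn)
  have hg2 : exRel h n (turanGraph M k') ≤
      (1 + δ₀ / 4) * h n (turanGraph n (k' - 1)) := hess.2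
  have hkey : (1 - δ) * exRel h n (turanGraph M k') ≤ h n G := by
    have hfam : (1 - δ₀ / 4) * exFam h 𝓐 n ≤ h n G := hhG
    nlinarith [mul_nonneg (by linarith : (0:ℝ) ≤ 1 - δ₀ / 4)
        (sub_nonneg.mpr hTf),
      mul_nonneg (sub_nonneg.mpr hδ₀leδ) hg0,
      mul_nonneg (by linarith : (0:ℝ) ≤ 1 - δ₀) (sub_nonneg.mpr hg2),
      mul_nonneg (le_of_lt hδ₀pos) hT0]
  exact hN₃ n (le_trans (le_trans (le_max_left N₃ N₄) (le_max_left _ _)) hn) G hGfree hkey
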